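/- Define K(x,y) := 1_{y≤x} ρ(y)/H(x) for x ≤ M and K(x,y) := 1_{y=x} for x ≥ M+1, where H(x) = Σ_{y=0}^x ρ(y) and ρ is a quasi-stationary vector (ρ > 0 on {0,...,M}, ρ = 0 above M, Σρ = 1, G†ρ = -λρ + λδ_{M+1} with λ = b_{M+1}ρ(M)). Then K is an invertible stochastic matrix, and the unique matrix G' := KGK⁻¹ has off-diagonal entries: G'(x,x+1) = b_{x+1}ρ(x)H(x+1)/(H(x)ρ(x+1)) for x < M, G'(M,M+1) = λ, G'(x,x+1) = b_{x+1} for x > M, G'(x,x-1) = d_{x+1}ρ(x+1)H(x-1)/(H(x)ρ(x)) for 0 < x < M, G'(x,x-1) = 0 for x ≥ M, and all other off-diagonal entries zero. -/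

import Mathlib

open Matrix Polynomial Finset

def bdGen (N : ℕ) (b d : ℕ → ℝ) : Matrix (Fin (N+1)) (Fin (N+1)) ℝ :=
  Matrix.of fun x y =>
    if (y : ℕ) = (x : ℕ) + 1 then b ((x : ℕ) + 1)
    else if (y : ℕ) + 1 = (x : ℕ) then d (x : ℕ)
    else if y = x then -((if (x : ℕ) < N then b ((x : ℕ) + 1) else 0) + d (x : ℕ))
    else 0

def Hfun (ρ : ℕ → ℝ) (x : ℕ) : ℝ := ∑ y ∈ Finset.range (x+1), ρ y

noncomputable def Kqs (N M : ℕ) (ρ : ℕ → ℝ) : Matrix (Fin (N+1)) (Fin (N+1)) ℝ :=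
  Matrix.of fun x y =>
    if (x : ℕ) ≤ M then (if (y : ℕ) ≤ (x : ℕ) then ρ (y : ℕ) / Hfun ρ (x : ℕ) else 0)
    else (if y = x then 1 else 0)

def gk (N : ℕ) (b d : ℕ → ℝ) (x y : ℕ) : ℝ :=
  if y = x + 1 then b (x+1)
  else if y + 1 = x then d x
  else if y = x then -((if x < N then b (x+1) else 0) + d x)
  else 0

noncomputable def kk (M : ℕ) (ρ : ℕ → ℝ) (x y : ℕ) : ℝ :=
  if x ≤ M then (if y ≤ x then ρ y / Hfun ρ x else 0) else if y = x then 1 else 0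

lemma bdGen_apply (N : ℕ) (b d : ℕ → ℝ) (x y : Fin (N+1)) :
    bdGen N b d x y = gk N b d x y := by
  simp only [bdGen, gk, Matrix.of_apply, Fin.ext_iff]

lemma Kqs_apply (N M : ℕ) (ρ : ℕ → ℝ) (x y : Fin (N+1)) :
    Kqs N M ρ x y = kk M ρ x y := by
  simp only [Kqs, kk, Matrix.of_apply, Fin.ext_iff]

lemma sum_left (N : ℕ) (b d : ℕ → ℝ) (c : ℕ → ℝ) (n Y : ℕ) :
    ∑ z ∈ Finset.range n, c z * gk N b d z Y
      = (if 1 ≤ Y ∧ Y - 1 < n then c (Y-1) * b Y else 0)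
      + (if Y < n then c Y * (-((if Y < N then b (Y+1) else 0) + d Y)) else 0)
      + (if Y + 1 < n then c (Y+1) * d (Y+1) else 0) := by
  have hpt : ∀ z, c z * gk N b d z Y
      = (if z = Y - 1 then (if 1 ≤ Y then c z * b Y else 0) else 0)
      + ((if z = Y then c z * (-((if Y < N then b (Y+1) else 0) + d Y)) else 0)
      + (if z = Y + 1 then c z * d (Y+1) else 0)) := by
    intro z
    unfold gk
    split_ifs <;> (try (exfalso; omega)) <;> (try ring) <;>
      first | (subst_vars; ring) | (rw [show z + 1 = Y by omega]; ring)
  rw [Finset.sum_congr rfl (fun z _ => hpt z), Finset.sum_add_distrib, Finset.sum_add_distrib,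
    Finset.sum_ite_eq' (Finset.range n) (Y - 1), Finset.sum_ite_eq' (Finset.range n) Y,
    Finset.sum_ite_eq' (Finset.range n) (Y + 1)]
  simp only [Finset.mem_range]
  have h1 : (if Y - 1 < n then if 1 ≤ Y then c (Y - 1) * b Y else 0 else 0)
      = (if 1 ≤ Y ∧ Y - 1 < n then c (Y - 1) * b Y else 0) := by
    split_ifs <;> first | rfl | (exfalso; omega)
  rw [h1]; ring

lemma sum_right (N : ℕ) (b d : ℕ → ℝ) (c : ℕ → ℝ) (X : ℕ) (hX : X ≤ N) :
    ∑ z ∈ Finset.range (N+1), gk N b d X z * c z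
      = (if 1 ≤ X then d X * c (X-1) else 0)
      + (-((if X < N then b (X+1) else 0) + d X)) * c X
      + (if X < N then b (X+1) * c (X+1) else 0) := by
  have hpt : ∀ z, gk N b d X z * c z
      = (if z = X - 1 then (if 1 ≤ X then d X * c z else 0) else 0)
      + ((if z = X then (-((if X < N then b (X+1) else 0) + d X)) * c z else 0)
      + (if z = X + 1 then b (X+1) * c z else 0)) := by
    intro z
    unfold gk
    split_ifs <;> (try (exfalso; omega)) <;> (try ring) <;>
      first | (subst_vars; ring) | (rw [show z + 1 = X by omega]; ring)
  rw [Finset.sum_congr rfl (fun z _ => hpt z), Finset.sum_add_distrib, Finset.sum_add_distrib,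
    Finset.sum_ite_eq' (Finset.range (N+1)) (X - 1), Finset.sum_ite_eq' (Finset.range (N+1)) X,
    Finset.sum_ite_eq' (Finset.range (N+1)) (X + 1)]
  simp only [Finset.mem_range]
  rw [if_pos (show X - 1 < N + 1 by omega), if_pos (show X < N + 1 by omega)]
  have h2 : (if X + 1 < N + 1 then b (X+1) * c (X+1) else 0)
      = (if X < N then b (X+1) * c (X+1) else 0) := by
    split_ifs <;> first | rfl | (exfalso; omega)
  have h3 : (if 1 ≤ X then d X * c (X-1) else 0) = (if 1 ≤ X then d X * c (X-1) else 0) := rfl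
  rw [h2]
  ring

noncomputable def bprime (M : ℕ) (b ρ : ℕ → ℝ) (lam : ℝ) (y : ℕ) : ℝ :=
  if y ≤ M then b y * ρ (y-1) * Hfun ρ y / (Hfun ρ (y-1) * ρ y)
  else if y = M+1 then lam else b y

noncomputable def dprime (M : ℕ) (d ρ : ℕ → ℝ) (x : ℕ) : ℝ :=
  if 1 ≤ x ∧ x < M then d (x+1) * ρ (x+1) * Hfun ρ (x-1) / (Hfun ρ x * ρ x) else 0

set_option maxHeartbeats 2000000 in
lemma key_entry (N M : ℕ) (hM : 1 ≤ M) (hMN : M + 1 ≤ N) (b d ρ : ℕ → ℝ) (lam : ℝ)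
    (hlam : lam = b (M+1) * ρ M)
    (hdz : ∀ x, M + 1 ≤ x → d x = 0) (hd0 : d 0 = 0)
    (hρ0 : ∀ x, M + 1 ≤ x → ρ x = 0)
    (hρne : ∀ x, x ≤ M → ρ x ≠ 0)
    (hHne : ∀ x, Hfun ρ x ≠ 0)
    (hH0 : Hfun ρ 0 = ρ 0) (hHs : ∀ x, Hfun ρ (x+1) = Hfun ρ x + ρ (x+1))
    (hHM : Hfun ρ M = 1)
    (hq : ∀ Y, Y ≤ M → (if 1 ≤ Y then ρ (Y-1) * b Y else 0)
      + ρ Y * (-(b (Y+1) + d Y)) + ρ (Y+1) * d (Y+1) = -lam * ρ Y)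
    (hdsub : ∀ X, X ≤ M → d (X+1) = (b (X+1) * ρ X - lam * Hfun ρ X) / ρ (X+1))
    (X Y : ℕ) (hX : X ≤ N) (hY : Y ≤ N) :
    ∑ z ∈ Finset.range (N+1), kk M ρ X z * gk N b d z Y
      = (if 1 ≤ X then dprime M d ρ X * kk M ρ (X-1) Y else 0)
      + (-((if X < N then bprime M b ρ lam (X+1) else 0) + dprime M d ρ X)) * kk M ρ X Y
      + (if X < N then bprime M b ρ lam (X+1) * kk M ρ (X+1) Y else 0) := by
  have kkle : ∀ u v, u ≤ M → v ≤ u → kk M ρ u v = ρ v / Hfun ρ u := by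
    intro u v h1 h2; simp [kk, h1, h2]
  have kkgt : ∀ u v, u ≤ M → ¬ v ≤ u → kk M ρ u v = 0 := by
    intro u v h1 h2; simp [kk, h1, h2]
  have kkhi : ∀ u v : ℕ, ¬ u ≤ M → kk M ρ u v = (if v = u then 1 else 0) := by
    intro u v h1; simp [kk, h1]
  by_cases hXM : X ≤ M
  · -- X ≤ M
    have hXN : X < N := by omega
    rw [if_pos hXN, if_pos hXN]
    have hLa : ∑ z ∈ Finset.range (N+1), kk M ρ X z * gk N b d z Y
        = ∑ z ∈ Finset.range (X+1), (fun z => ρ z / Hfun ρ X) z * gk N b d z Y := by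
      rw [← Finset.sum_subset (Finset.range_subset_range.mpr (show X+1 ≤ N+1 by omega))
          (fun z hz hnz => by
            simp only [Finset.mem_range] at hz hnz
            simp [kk, hXM, show ¬(z ≤ X) by omega])]
      exact Finset.sum_congr rfl fun z hz => by
        simp only [Finset.mem_range] at hz
        simp [kk, hXM, show z ≤ X by omega]
    rw [hLa, sum_left]
    beta_reduce
    by_cases hY1 : Y = X + 1
    · -- Y = X+1
      subst hY1
      rw [if_pos (show 1 ≤ X + 1 ∧ X + 1 - 1 < X + 1 by omega),
        if_neg (show ¬(X + 1 < X + 1) by omega),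
        if_neg (show ¬(X + 1 + 1 < X + 1) by omega),
        Nat.add_sub_cancel,
        kkgt X (X+1) hXM (by omega)]
      by_cases hXe : X = M
      · rw [hXe, kkhi (M+1) (M+1) (by omega), if_pos rfl, hHM,
          show bprime M b ρ lam (M+1) = lam by simp [bprime],
          show dprime M d ρ M = 0 by simp [dprime], hlam]
        by_cases h1M : 1 ≤ M
        · rw [if_pos h1M, kkgt (M-1) (M+1) (by omega) (by omega)]
          ring
        · omega
      · rw [kkle (X+1) (X+1) (by omega) le_rfl,
          show bprime M b ρ lam (X+1) = b (X+1) * ρ X * Hfun ρ (X+1) / (Hfun ρ X * ρ (X+1)) by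
            simp [bprime, show X + 1 ≤ M by omega]]
        have hz1 : (if 1 ≤ X then dprime M d ρ X * kk M ρ (X-1) (X+1) else 0) = 0 := by
          split_ifs with h
          · rw [kkgt (X-1) (X+1) (by omega) (by omega), mul_zero]
          · rfl
        rw [hz1]
        field_simp [hρne (X+1) (by omega), hHne X, hHne (X+1)]
        ring
    · by_cases hY0 : Y = X
      · -- Y = X
        rw [hY0]
        rw [show (if 1 ≤ X ∧ X - 1 < X + 1 then ρ (X-1) / Hfun ρ X * b X else 0)
              = (if 1 ≤ X then ρ (X-1) / Hfun ρ X * b X else 0) from by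
            split_ifs <;> first | rfl | (exfalso; omega),
          if_pos (show X < X + 1 by omega), if_pos hXN,
          if_neg (show ¬(X + 1 < X + 1) by omega),
          kkle X X hXM le_rfl]
        have hz1 : (if 1 ≤ X then dprime M d ρ X * kk M ρ (X-1) X else 0) = 0 := by
          split_ifs with h
          · rw [kkgt (X-1) X (by omega) (by omega), mul_zero]
          · rfl
        rw [hz1]
        by_cases hXe : X = M
        · rw [hXe, kkhi (M+1) M (by omega), if_neg (show ¬(M = M+1) by omega),
            show bprime M b ρ lam (M+1) = lam by simp [bprime],
            show dprime M d ρ M = 0 by simp [dprime], if_pos hM]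
          have hqM := hq M le_rfl
          rw [if_pos hM, hρ0 (M+1) (by omega)] at hqM
          field_simp [hHne M]
          linarith [hqM]
        · -- X < M
          rw [show bprime M b ρ lam (X+1) = b (X+1) * ρ X * Hfun ρ (X+1) / (Hfun ρ X * ρ (X+1)) from by
              simp [bprime, show X + 1 ≤ M by omega],
            kkle (X+1) X (by omega) (by omega)]
          by_cases hX0 : X = 0
          · rw [hX0]
            rw [show dprime M d ρ 0 = 0 from by simp [dprime], if_neg (show ¬(1 ≤ 0) by omega),
              hd0]
            have e1 := hHne 1
            simp only [hHs] at e1 ⊢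
            rw [hH0] at e1 ⊢
            field_simp [hρne 0 (by omega), hρne 1 (by omega), e1]
            ring
          · obtain ⟨X', rfl⟩ : ∃ X', X = X' + 1 := ⟨X - 1, by omega⟩
            rw [if_pos (show 1 ≤ X' + 1 by omega), Nat.add_sub_cancel,
              show dprime M d ρ (X'+1)
                  = d (X'+1+1) * ρ (X'+1+1) * Hfun ρ X' / (Hfun ρ (X'+1) * ρ (X'+1)) from by
                simp [dprime, show 1 ≤ X' + 1 ∧ X' + 1 < M from ⟨by omega, by omega⟩],
              hdsub (X'+1) (by omega), hdsub X' (by omega)]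
            have e1 := hHne (X'+1)
            have e2 := hHne (X'+1+1)
            simp only [hHs] at e1 e2 ⊢
            set h0 := Hfun ρ X' with hh0
            set r0 := ρ X' with hr0
            set r1 := ρ (X'+1) with hr1
            set r2 := ρ (X'+1+1) with hr2
            have r1ne : r1 ≠ 0 := hρne (X'+1) (by omega)
            have r2ne : r2 ≠ 0 := hρne (X'+1+1) (by omega)
            have h0ne : h0 ≠ 0 := hHne X'
            field_simp [r1ne, r2ne, h0ne, e1, e2]
            ring
      · by_cases hYlt : Y < X
        · -- Y < X
          rw [show (if 1 ≤ Y ∧ Y - 1 < X + 1 then ρ (Y-1) / Hfun ρ X * b Y else 0)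
                = (if 1 ≤ Y then ρ (Y-1) / Hfun ρ X * b Y else 0) from by
              split_ifs <;> first | rfl | (exfalso; omega),
            if_pos (show Y < X + 1 by omega), if_pos (show Y + 1 < X + 1 by omega),
            if_pos (show Y < N by omega),
            if_pos (show 1 ≤ X by omega),
            kkle (X-1) Y (by omega) (by omega), kkle X Y hXM (by omega)]
          by_cases hXe : X = M
          · rw [hXe, kkhi (M+1) Y (by omega), if_neg (show ¬(Y = M+1) by omega),
              show bprime M b ρ lam (M+1) = lam by simp [bprime],
              show dprime M d ρ M = 0 by simp [dprime]]
            have hqY := hq Y (by omega)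
            by_cases hY1' : 1 ≤ Y
            · rw [if_pos hY1'] at hqY ⊢
              field_simp [hHne M]
              simp only [mul_zero, zero_div, add_zero, zero_mul, zero_add] at hqY ⊢
              linarith [hqY]
            · rw [if_neg hY1'] at hqY ⊢
              field_simp [hHne M]
              simp only [mul_zero, zero_div, add_zero, zero_mul, zero_add] at hqY ⊢
              linarith [hqY]
          · -- X < M
            obtain ⟨X'', rfl⟩ : ∃ X'', X = X'' + 1 := ⟨X - 1, by omega⟩
            rw [Nat.add_sub_cancel,
              show bprime M b ρ lam (X''+1+1)
                  = b (X''+1+1) * ρ (X''+1) * Hfun ρ (X''+1+1) / (Hfun ρ (X''+1) * ρ (X''+1+1)) from by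
                simp [bprime, show X'' + 1 + 1 ≤ M by omega],
              show dprime M d ρ (X''+1)
                  = d (X''+1+1) * ρ (X''+1+1) * Hfun ρ X'' / (Hfun ρ (X''+1) * ρ (X''+1)) from by
                simp [dprime, show 1 ≤ X'' + 1 ∧ X'' + 1 < M from ⟨by omega, by omega⟩],
              kkle (X''+1+1) Y (by omega) (by omega),
              hdsub (X''+1) (by omega)]
            by_cases hY0' : Y = 0
            · rw [hY0', if_neg (show ¬(1 ≤ 0) by omega), hd0, hdsub 0 (by omega)]
              have e1 := hHne (X''+1)
              have e2 := hHne (X''+1+1)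
              simp only [hHs] at e1 e2 ⊢
              simp only [hH0] at e1 e2 ⊢
              simp only [zero_add] at e1 e2 ⊢
              set h0 := Hfun ρ X'' with hh0
              set r1x := ρ (X''+1) with hr1x
              set r2x := ρ (X''+1+1) with hr2x
              set q0 := ρ 0 with hq0
              set q1 := ρ 1 with hq1
              have r1ne : r1x ≠ 0 := hρne (X''+1) (by omega)
              have r2ne : r2x ≠ 0 := hρne (X''+1+1) (by omega)
              have q0ne : q0 ≠ 0 := hρne 0 (by omega)
              have q1ne : q1 ≠ 0 := hρne 1 (by omega)
              have h0ne : h0 ≠ 0 := hHne X''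
              field_simp [r1ne, r2ne, q0ne, q1ne, h0ne, e1, e2]
              ring
            · obtain ⟨Y', rfl⟩ : ∃ Y', Y = Y' + 1 := ⟨Y - 1, by omega⟩
              rw [if_pos (show 1 ≤ Y' + 1 by omega), Nat.add_sub_cancel,
                hdsub Y' (by omega), hdsub (Y'+1) (by omega)]
              have e1 := hHne (X''+1)
              have e2 := hHne (X''+1+1)
              have e3 := hHne (Y'+1)
              simp only [hHs] at e1 e2 e3 ⊢
              set h0 := Hfun ρ X'' with hh0
              set hy := Hfun ρ Y' with hhy
              set r1x := ρ (X''+1) with hr1x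
              set r2x := ρ (X''+1+1) with hr2x
              set q0 := ρ Y' with hq0
              set q1 := ρ (Y'+1) with hq1
              set q2 := ρ (Y'+1+1) with hq2
              have r1ne : r1x ≠ 0 := hρne (X''+1) (by omega)
              have r2ne : r2x ≠ 0 := hρne (X''+1+1) (by omega)
              have q1ne : q1 ≠ 0 := hρne (Y'+1) (by omega)
              have q2ne : q2 ≠ 0 := hρne (Y'+1+1) (by omega)
              have h0ne : h0 ≠ 0 := hHne X''
              have hyne : hy ≠ 0 := hHne Y'
              field_simp [r1ne, r2ne, q1ne, q2ne, h0ne, hyne, e1, e2, e3]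
              ring
        · -- Y ≥ X + 2
          rw [if_neg (show ¬(1 ≤ Y ∧ Y - 1 < X + 1) by omega),
            if_neg (show ¬(Y < X + 1) by omega), if_neg (show ¬(Y + 1 < X + 1) by omega),
            kkgt X Y hXM (by omega)]
          have hz1 : (if 1 ≤ X then dprime M d ρ X * kk M ρ (X-1) Y else 0) = 0 := by
            split_ifs with h
            · rw [kkgt (X-1) Y (by omega) (by omega), mul_zero]
            · rfl
          have hz2 : kk M ρ (X+1) Y = 0 := by
            by_cases h : X + 1 ≤ M
            · exact kkgt (X+1) Y h (by omega)
            · rw [kkhi (X+1) Y h, if_neg (by omega)]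
          rw [hz1, hz2]
          ring
  · -- X > M
    have hLd : ∑ z ∈ Finset.range (N+1), kk M ρ X z * gk N b d z Y = gk N b d X Y := by
      have hc : ∀ z ∈ Finset.range (N+1), kk M ρ X z * gk N b d z Y
          = if z = X then gk N b d z Y else 0 := fun z _ => by
        rw [kkhi X z hXM, ite_mul, one_mul, zero_mul]
      rw [Finset.sum_congr rfl hc,
        Finset.sum_ite_eq' (Finset.range (N+1)) X, if_pos (Finset.mem_range.mpr (by omega))]
    rw [hLd]
    have hdp : dprime M d ρ X = 0 := by simp [dprime, show ¬(1 ≤ X ∧ X < M) by omega]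
    have hbp : bprime M b ρ lam (X+1) = b (X+1) := by
      simp [bprime, show ¬(X + 1 ≤ M) by omega, show ¬(X + 1 = M + 1) by omega, show ¬(X = M) by omega]
    rw [hdp, hbp, kkhi X Y hXM]
    have hz1 : (if 1 ≤ X then (0:ℝ) * kk M ρ (X-1) Y else 0) = 0 := by
      split_ifs <;> simp
    rw [hz1]
    have hz2 : kk M ρ (X+1) Y = (if Y = X + 1 then 1 else 0) := kkhi (X+1) Y (by omega)
    rw [hz2]
    unfold gk
    rw [hdz X (by omega)]
    split_ifs <;> first | (exfalso; omega) | ring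

theorem stmt8 (N M : ℕ) (hM : 1 ≤ M) (hMN : M + 1 ≤ N) (b d : ℕ → ℝ)
    (hb : ∀ x, 1 ≤ x → x ≤ N → 0 < b x)
    (hd : ∀ x, 1 ≤ x → x ≤ M → 0 < d x)
    (hdz : ∀ x, M + 1 ≤ x → d x = 0) (hd0 : d 0 = 0)
    (ρ : ℕ → ℝ) (lam : ℝ)
    (hlam : lam = b (M+1) * ρ M) (hlampos : 0 < lam)
    (hρpos : ∀ x, x ≤ M → 0 < ρ x)
    (hρ0 : ∀ x, M + 1 ≤ x → ρ x = 0)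
    (hρsum : ∑ x ∈ Finset.range (N+1), ρ x = 1)
    (hquasi : Matrix.vecMul (fun x : Fin (N+1) => ρ (x : ℕ)) (bdGen N b d)
      = fun x : Fin (N+1) =>
          -lam * ρ (x : ℕ) + lam * (if (x : ℕ) = M + 1 then (1:ℝ) else 0)) :
    IsUnit (Kqs N M ρ).det ∧
    (∀ x y, 0 ≤ Kqs N M ρ x y) ∧ (∀ x, ∑ y, Kqs N M ρ x y = 1) ∧
    (∀ x y : Fin (N+1), x ≠ y →
      (Kqs N M ρ * bdGen N b d * (Kqs N M ρ)⁻¹) x y =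
        if (y : ℕ) = (x : ℕ) + 1 then
          (if (x : ℕ) < M then
            b ((x : ℕ)+1) * ρ (x : ℕ) * Hfun ρ ((x : ℕ)+1)
              / (Hfun ρ (x : ℕ) * ρ ((x : ℕ)+1))
           else if (x : ℕ) = M then lam
           else b ((x : ℕ)+1))
        else if (y : ℕ) + 1 = (x : ℕ) then
          (if 0 < (x : ℕ) ∧ (x : ℕ) < M then
            d ((x : ℕ)+1) * ρ ((x : ℕ)+1) * Hfun ρ ((x : ℕ)-1)
              / (Hfun ρ (x : ℕ) * ρ (x : ℕ))
           else 0)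
        else 0) := by
  have hρnn : ∀ x, 0 ≤ ρ x := by
    intro x
    rcases le_or_gt x M with h | h
    · exact (hρpos x h).le
    · rw [hρ0 x (by omega)]
  have hHpos : ∀ x, 0 < Hfun ρ x := by
    intro x
    apply Finset.sum_pos' (fun i _ => hρnn i)
    exact ⟨0, Finset.mem_range.mpr (by omega), hρpos 0 (by omega)⟩
  have hHne : ∀ x, Hfun ρ x ≠ 0 := fun x => (hHpos x).ne'
  have hρne : ∀ x, x ≤ M → ρ x ≠ 0 := fun x hx => (hρpos x hx).ne'
  have hH0 : Hfun ρ 0 = ρ 0 := by simp [Hfun]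
  have hHs : ∀ x, Hfun ρ (x+1) = Hfun ρ x + ρ (x+1) := fun x => Finset.sum_range_succ ρ (x+1)
  have hHM : Hfun ρ M = 1 := by
    rw [← hρsum]
    exact Finset.sum_subset (Finset.range_subset_range.mpr (by omega))
      (fun x hx hnx => hρ0 x (by simp only [Finset.mem_range] at hx hnx; omega))
  -- pointwise quasistationarity
  have hq : ∀ Y, Y ≤ M → (if 1 ≤ Y then ρ (Y-1) * b Y else 0)
      + ρ Y * (-(b (Y+1) + d Y)) + ρ (Y+1) * d (Y+1) = -lam * ρ Y := by
    intro Y hY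
    have h0 := congrFun hquasi ⟨Y, by omega⟩
    simp only [Matrix.vecMul, dotProduct] at h0
    have h0' : ∑ x : Fin (N+1), ρ (x:ℕ) * bdGen N b d x ⟨Y, by omega⟩
        = ∑ z ∈ Finset.range (N+1), ρ z * gk N b d z Y := by
      rw [← Fin.sum_univ_eq_sum_range (fun z => ρ z * gk N b d z Y) (N+1)]
      exact Finset.sum_congr rfl fun j _ => by rw [bdGen_apply]
    rw [h0', sum_left] at h0
    rw [show (if 1 ≤ Y ∧ Y - 1 < N + 1 then ρ (Y-1) * b Y else 0)
          = (if 1 ≤ Y then ρ (Y-1) * b Y else 0) from by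
        split_ifs <;> first | rfl | (exfalso; omega),
      if_pos (show Y < N+1 by omega), if_pos (show Y+1 < N+1 by omega),
      if_pos (show Y < N by omega)] at h0
    rw [if_neg (show ¬((⟨Y, by omega⟩ : Fin (N+1)) : ℕ) = M + 1 from by simp; omega)] at h0
    linarith [h0]
  -- the key telescoped identity
  have hstar : ∀ X, X ≤ M → b (X+1) * ρ X - d (X+1) * ρ (X+1) = lam * Hfun ρ X := by
    intro X
    induction X with
    | zero =>
      intro _
      have h0 := hq 0 (by omega)
      rw [if_neg (by omega), hd0] at h0
      rw [hH0]
      linarith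
    | succ X ih =>
      intro hX
      have h1 := hq (X+1) hX
      have h2 := ih (by omega)
      rw [if_pos (by omega : 1 ≤ X + 1), Nat.add_sub_cancel] at h1
      rw [hHs]
      linarith
  -- explicit inverse formulas for d in terms of b, lam, H
  have hdsub : ∀ X, X ≤ M → d (X+1) = (b (X+1) * ρ X - lam * Hfun ρ X) / ρ (X+1) := by
    intro X hX
    rcases le_or_gt (X+1) M with h | h
    · field_simp [hρne (X+1) h]
      linear_combination -hstar X hX
    · have hXM : X = M := by omega
      rw [hXM, hdz (M+1) (by omega), hρ0 (M+1) (by omega), div_zero]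
  -- Part 1: determinant
  have hdet : IsUnit (Kqs N M ρ).det := by
    have htri : (Kqs N M ρ).BlockTriangular OrderDual.toDual := by
      intro i j hij
      have hv : (i:ℕ) < (j:ℕ) := hij
      show Kqs N M ρ i j = 0
      simp only [Kqs, Matrix.of_apply]
      split_ifs with h1 h2 h3
      · exfalso; omega
      · rfl
      · exfalso; subst h3; omega
      · rfl
    rw [Matrix.det_of_lowerTriangular _ htri, isUnit_iff_ne_zero]
    apply Finset.prod_ne_zero_iff.mpr
    intro i _
    simp only [Kqs, Matrix.of_apply]
    split_ifs with h1 h2 h3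
    · exact div_ne_zero (hρne _ h1) (hHne _)
    · exfalso; omega
    · exact one_ne_zero
  -- Part 2: nonnegativity
  have hnn : ∀ x y, 0 ≤ Kqs N M ρ x y := by
    intro x y
    simp only [Kqs, Matrix.of_apply]
    split_ifs <;> first | exact div_nonneg (hρnn _) (hHpos _).le | norm_num
  -- Part 3: row sums
  have hrow : ∀ x, ∑ y, Kqs N M ρ x y = 1 := by
    intro x
    have hXN : (x:ℕ) ≤ N := Nat.lt_succ_iff.mp x.isLt
    have h1 : ∑ y, Kqs N M ρ x y = ∑ z ∈ Finset.range (N+1), kk M ρ (x:ℕ) z := by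
      rw [← Fin.sum_univ_eq_sum_range (fun z => kk M ρ (x:ℕ) z) (N+1)]
      exact Finset.sum_congr rfl fun j _ => Kqs_apply N M ρ x j
    rw [h1]
    by_cases hxM : (x:ℕ) ≤ M
    · rw [← Finset.sum_subset (Finset.range_subset_range.mpr (show (x:ℕ)+1 ≤ N+1 by omega))
          (fun z hz hnz => by
            simp only [Finset.mem_range] at hz hnz
            simp [kk, hxM, show ¬(z ≤ (x:ℕ)) by omega])]
      have h2 : ∑ z ∈ Finset.range ((x:ℕ)+1), kk M ρ (x:ℕ) z
          = ∑ z ∈ Finset.range ((x:ℕ)+1), ρ z / Hfun ρ (x:ℕ) :=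
        Finset.sum_congr rfl fun z hz => by
          simp only [Finset.mem_range] at hz
          simp [kk, hxM, show z ≤ (x:ℕ) by omega]
      rw [h2, ← Finset.sum_div, div_eq_one_iff_eq (hHne _)]
      rfl
    · have h2 : ∀ z ∈ Finset.range (N+1), kk M ρ (x:ℕ) z = if z = (x:ℕ) then 1 else 0 :=
        fun z _ => by simp [kk, hxM]
      rw [Finset.sum_congr rfl h2, Finset.sum_ite_eq' (Finset.range (N+1)) ((x:ℕ)),
        if_pos (Finset.mem_range.mpr (by omega))]
  -- Key intertwining identity
  have hkey : Kqs N M ρ * bdGen N b d = bdGen N (bprime M b ρ lam) (dprime M d ρ) * Kqs N M ρ := by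
    ext x y
    have hXN : (x:ℕ) ≤ N := Nat.lt_succ_iff.mp x.isLt
    have hYN : (y:ℕ) ≤ N := Nat.lt_succ_iff.mp y.isLt
    rw [Matrix.mul_apply, Matrix.mul_apply]
    have hL : ∑ j, Kqs N M ρ x j * bdGen N b d j y
        = ∑ z ∈ Finset.range (N+1), kk M ρ (x:ℕ) z * gk N b d z (y:ℕ) := by
      rw [← Fin.sum_univ_eq_sum_range (fun z => kk M ρ (x:ℕ) z * gk N b d z (y:ℕ)) (N+1)]
      exact Finset.sum_congr rfl fun j _ => by rw [Kqs_apply, bdGen_apply]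
    have hR : ∑ j, bdGen N (bprime M b ρ lam) (dprime M d ρ) x j * Kqs N M ρ j y
        = ∑ z ∈ Finset.range (N+1),
            gk N (bprime M b ρ lam) (dprime M d ρ) (x:ℕ) z * kk M ρ z (y:ℕ) := by
      rw [← Fin.sum_univ_eq_sum_range
        (fun z => gk N (bprime M b ρ lam) (dprime M d ρ) (x:ℕ) z * kk M ρ z (y:ℕ)) (N+1)]
      exact Finset.sum_congr rfl fun j _ => by rw [Kqs_apply, bdGen_apply]
    rw [hL, hR, sum_right N (bprime M b ρ lam) (dprime M d ρ)
      (fun z => kk M ρ z (y:ℕ)) (x:ℕ) hXN]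
    exact key_entry N M hM hMN b d ρ lam hlam hdz hd0 hρ0 hρne hHne hH0 hHs hHM hq hdsub
      (x:ℕ) (y:ℕ) hXN hYN
  refine ⟨hdet, hnn, hrow, ?_⟩
  intro x y hxy
  have hG' : Kqs N M ρ * bdGen N b d * (Kqs N M ρ)⁻¹
      = bdGen N (bprime M b ρ lam) (dprime M d ρ) := by
    rw [hkey, Matrix.mul_assoc, Matrix.mul_nonsing_inv _ hdet, Matrix.mul_one]
  rw [hG', bdGen_apply]
  unfold gk
  by_cases h1 : (y:ℕ) = (x:ℕ) + 1
  · rw [if_pos h1, if_pos h1]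
    unfold bprime
    by_cases h2 : (x:ℕ) < M
    · rw [if_pos (show (x:ℕ)+1 ≤ M by omega), if_pos h2, Nat.add_sub_cancel]
    · by_cases h3 : (x:ℕ) = M
      · rw [if_neg (show ¬((x:ℕ)+1 ≤ M) by omega), if_pos (show (x:ℕ)+1 = M+1 by omega),
          if_neg h2, if_pos h3]
      · rw [if_neg (show ¬((x:ℕ)+1 ≤ M) by omega), if_neg (show ¬((x:ℕ)+1 = M+1) by omega),
          if_neg h2, if_neg h3]
  · rw [if_neg h1, if_neg h1]
    by_cases h2 : (y:ℕ) + 1 = (x:ℕ)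
    · rw [if_pos h2, if_pos h2]
      unfold dprime
      split_ifs with ha hb <;> first | rfl | (exfalso; omega)
    · rw [if_neg h2, if_neg h2, if_neg (show ¬((y:ℕ) = (x:ℕ)) from
        fun h => hxy ((Fin.ext h).symm))]
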